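/- Let V be symmetric positive definite of size N+K, partitioned with benchmark block indices {1,…,K} and test block indices {K+1,…,N+K}, and let wᵟ = V⁻¹1/(1ᵀV⁻¹1). If the last N coordinates of wᵟ are zero, then the first K coordinates of wᵟ equal V₁₁⁻¹ 1_K / (1_Kᵀ V₁₁⁻¹ 1_K), i.e., the global minimum-variance portfolio of all assets coincides with the global minimum-variance portfolio of the benchmark assets alone, and 1ᵀ V⁻¹ 1 = 1_Kᵀ V₁₁⁻¹ 1_K. -/

import Mathlib

open Matrix

/-- If the test-asset coordinates of the global minimum-variance portfolio vanish, then
its benchmark coordinates equal the benchmark-only global minimum-variance portfolio,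
and `1ᵀV⁻¹1 = 1_Kᵀ V₁₁⁻¹ 1_K`. -/
theorem stmt14 (N K : ℕ) (V : Matrix (Fin K ⊕ Fin N) (Fin K ⊕ Fin N) ℝ)
    (hV : V.PosDef) :
    let ones : Fin K ⊕ Fin N → ℝ := fun _ => 1
    let onesK : Fin K → ℝ := fun _ => 1
    let wδ : Fin K ⊕ Fin N → ℝ := (ones ⬝ᵥ (V⁻¹ *ᵥ ones))⁻¹ • (V⁻¹ *ᵥ ones)
    (∀ i : Fin N, wδ (Sum.inr i) = 0) →
      (∀ k : Fin K,
          wδ (Sum.inl k) =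
            ((onesK ⬝ᵥ ((V.toBlocks₁₁)⁻¹ *ᵥ onesK))⁻¹ •
              ((V.toBlocks₁₁)⁻¹ *ᵥ onesK)) k) ∧
        ones ⬝ᵥ (V⁻¹ *ᵥ ones) = onesK ⬝ᵥ ((V.toBlocks₁₁)⁻¹ *ᵥ onesK) := by
  intro ones onesK wδ h
  cases isEmpty_or_nonempty (Fin K ⊕ Fin N) with
  | inl hE =>
    haveI : IsEmpty (Fin K) := ⟨fun k => hE.false (Sum.inl k)⟩
    constructor
    · intro k; exact (IsEmpty.false k).elim
    · simp [dotProduct]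
  | inr hNE =>
    set w : Fin K ⊕ Fin N → ℝ := V⁻¹ *ᵥ ones with hw
    have hones : ones ≠ 0 := by
      intro hcon
      simpa [ones] using congrFun hcon (Classical.arbitrary _)
    have hdet : IsUnit V.det := isUnit_iff_isUnit_det V |>.1 hV.isUnit
    have hc : 0 < ones ⬝ᵥ w := by
      have := hV.inv.dotProduct_mulVec_pos hones
      simpa using this
    have hcne : ones ⬝ᵥ w ≠ 0 := ne_of_gt hc
    have hVw : V *ᵥ w = ones := by
      rw [hw, mulVec_mulVec, mul_nonsing_inv _ hdet, one_mulVec]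
    have hw0 : ∀ i, w (Sum.inr i) = 0 := by
      intro i
      have hi := h i
      simp only [wδ, Pi.smul_apply, smul_eq_mul] at hi
      rcases mul_eq_zero.1 hi with h1 | h2
      · exact absurd (inv_eq_zero.1 h1) hcne
      · exact h2
    have h11 : (V.toBlocks₁₁).PosDef := by
      apply Matrix.PosDef.of_dotProduct_mulVec_pos
      · ext i j
        have := congrFun (congrFun hV.1 (Sum.inl i)) (Sum.inl j)
        simpa [conjTranspose_apply, toBlocks₁₁] using this
      · intro x hx
        have hy : (Sum.elim x (0 : Fin N → ℝ)) ≠ 0 := by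
          intro hcon
          apply hx
          ext i
          exact congrFun hcon (Sum.inl i)
        have hpos := hV.dotProduct_mulVec_pos hy
        have : (Sum.elim x (0 : Fin N → ℝ)) ⬝ᵥ (V *ᵥ Sum.elim x 0)
            = x ⬝ᵥ (V.toBlocks₁₁ *ᵥ x) := by
          simp [dotProduct, mulVec, Fintype.sum_sum_type, toBlocks₁₁, mul_comm]
        simpa [this] using hpos
    have hdet11 : IsUnit (V.toBlocks₁₁).det := isUnit_iff_isUnit_det _ |>.1 h11.isUnit
    set x : Fin K → ℝ := fun k => w (Sum.inl k) with hxdef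
    have hx : V.toBlocks₁₁ *ᵥ x = onesK := by
      ext k
      have hk := congrFun hVw (Sum.inl k)
      simpa [mulVec, dotProduct, Fintype.sum_sum_type, toBlocks₁₁, hw0, ones, onesK, x] using hk
    have hxeq : x = (V.toBlocks₁₁)⁻¹ *ᵥ onesK := by
      rw [← hx, mulVec_mulVec, nonsing_inv_mul _ hdet11, one_mulVec]
    have hsum : ones ⬝ᵥ w = onesK ⬝ᵥ x := by
      simp [dotProduct, Fintype.sum_sum_type, ones, onesK, hw0, x]
    constructor
    · intro k
      have hwk : w (Sum.inl k) = ((V.toBlocks₁₁)⁻¹ *ᵥ onesK) k := by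
        rw [← hxeq]
      simp only [wδ, Pi.smul_apply, smul_eq_mul]
      rw [hsum, hxeq, ← hw, hwk]
    · rw [hsum, hxeq]
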